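/- Let X : ℝ → Matrix (Fin N) (Fin N) ℂ be the fundamental solution of the linear ODE X'(t) = A(t) X(t), X(0) = 1, where A is continuous and T-periodic (T > 0). Then X(t + T) = X(t) * X(T) for all t ∈ ℝ. -/

import Mathlib

open scoped Matrix

open Set in
/-- If `X` is the fundamental solution of the `T`-periodic linear system
`X' = A(t) X`, `X 0 = 1` (with `A` continuous and `T`-periodic), then
`X (t + T) = X t * X T` for all `t`. -/
theorem floquet_cocycle (N : ℕ) (T : ℝ) (hT : 0 < T)
    (A X : ℝ → Matrix (Fin N) (Fin N) ℂ)
    (hA_cont : ∀ i j, Continuous fun t => A t i j)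
    (hA_per : ∀ t, A (t + T) = A t)
    (hX0 : X 0 = 1)
    (hX_ode : ∀ t i j, HasDerivAt (fun s => X s i j) ((A t * X t) i j) t) :
    ∀ t : ℝ, X (t + T) = X t * X T := by
  intro t
  -- state space: matrices as plain functions with the sup norm
  set E := (Fin N → Fin N → ℂ) with hE
  -- the two candidate solutions
  set f : ℝ → E := fun τ => fun i j => X (τ + T) i j with hf_def
  set g : ℝ → E := fun τ => fun i j => (X τ * X T) i j with hg_def
  -- the interval
  set b : ℝ := |t| + 1 with hb_def
  have hb0 : 0 < b := by positivity
  have hab : (-b : ℝ) < b := by linarith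
  have ht_mem : t ∈ Icc (-b) b := by
    constructor
    · have := neg_abs_le t; linarith
    · have := le_abs_self t; linarith
  have h0_mem : (0 : ℝ) ∈ Ioo (-b) b := ⟨by linarith, hb0⟩
  -- uniform bound for A on the compact interval
  have hgcont : Continuous fun τ => ∑ i, ∑ k, ‖A τ i k‖ := by
    refine continuous_finset_sum _ fun i _ => continuous_finset_sum _ fun k _ => ?_
    exact (hA_cont i k).norm
  obtain ⟨σ₀, hσ₀, hmax⟩ := (isCompact_Icc (a := -b) (b := b)).exists_isMaxOn
    (nonempty_Icc.2 hab.le) hgcont.continuousOn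
  set K1 : ℝ := ∑ i, ∑ k, ‖A σ₀ i k‖ with hK1def
  have hK1 : ∀ τ ∈ Icc (-b) b, ∑ i, ∑ k, ‖A τ i k‖ ≤ K1 := fun τ hτ => hmax hτ
  -- the (clamped) vector field
  set v : ℝ → E → E := fun τ M => fun i j =>
    ∑ k, A (projIcc (-b) b hab.le τ) i k * M k j with hv_def
  have hv_eq : ∀ τ ∈ Icc (-b) b, ∀ M : E, v τ M = fun i j => ∑ k, A τ i k * M k j := by
    intro τ hτ M
    simp [hv_def, projIcc_of_mem hab.le hτ]
  -- Lipschitz bound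
  have hlip : ∀ τ : ℝ, LipschitzOnWith K1.toNNReal (v τ) univ := by
    intro τ
    refine (LipschitzWith.of_dist_le_mul fun M M' => ?_).lipschitzOnWith
    rw [dist_eq_norm, dist_eq_norm]
    have h1 : v τ M - v τ M' = fun i j => ∑ k, A (projIcc (-b) b hab.le τ) i k
        * (M k j - M' k j) := by
      funext i j
      show (v τ M) i j - (v τ M') i j = _
      simp [hv_def, mul_sub, Finset.sum_sub_distrib]
    rw [h1]
    have hKnn : (0:ℝ) ≤ (K1.toNNReal : ℝ) * ‖M - M'‖ := by positivity
    refine (pi_norm_le_iff_of_nonneg hKnn).2 fun i => ?_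
    refine (pi_norm_le_iff_of_nonneg hKnn).2 fun j => ?_
    calc ‖∑ k, A (projIcc (-b) b hab.le τ) i k * (M k j - M' k j)‖
        ≤ ∑ k, ‖A (projIcc (-b) b hab.le τ) i k‖ * ‖M k j - M' k j‖ := by
          refine (norm_sum_le _ _).trans ?_
          exact Finset.sum_le_sum fun k _ => (norm_mul_le _ _)
      _ ≤ ∑ k, ‖A (projIcc (-b) b hab.le τ) i k‖ * ‖M - M'‖ := by
          refine Finset.sum_le_sum fun k _ => ?_
          refine mul_le_mul_of_nonneg_left ?_ (norm_nonneg _)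
          have h2 : ‖(M - M') k‖ ≤ ‖M - M'‖ := norm_le_pi_norm (M - M') k
          have h3 : ‖(M - M') k j‖ ≤ ‖(M - M') k‖ := norm_le_pi_norm ((M - M') k) j
          exact h3.trans h2
      _ = (∑ k, ‖A (projIcc (-b) b hab.le τ) i k‖) * ‖M - M'‖ := by
          rw [Finset.sum_mul]
      _ ≤ (K1.toNNReal : ℝ) * ‖M - M'‖ := by
          refine mul_le_mul_of_nonneg_right ?_ (norm_nonneg _)
          have hmem : (projIcc (-b) b hab.le τ : ℝ) ∈ Icc (-b) b := (projIcc (-b) b hab.le τ).2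
          calc (∑ k, ‖A (projIcc (-b) b hab.le τ) i k‖)
              ≤ ∑ i', ∑ k, ‖A (projIcc (-b) b hab.le τ) i' k‖ := by
                refine Finset.single_le_sum (f := fun i' => ∑ k,
                  ‖A (projIcc (-b) b hab.le τ) i' k‖) (fun i' _ => ?_) (Finset.mem_univ i)
                exact Finset.sum_nonneg fun k _ => norm_nonneg _
            _ ≤ K1 := hK1 _ hmem
            _ ≤ (K1.toNNReal : ℝ) := Real.le_coe_toNNReal K1
  -- derivative of f
  have hf' : ∀ τ ∈ Ioo (-b) b, HasDerivAt f (v τ (f τ)) τ := by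
    intro τ hτ
    rw [hv_eq τ (Ioo_subset_Icc_self hτ)]
    refine hasDerivAt_pi.2 fun i => hasDerivAt_pi.2 fun j => ?_
    have hid : HasDerivAt (fun s : ℝ => s + T) 1 τ := by
      simpa using (hasDerivAt_id τ).add_const T
    have h := (hX_ode (τ + T) i j).scomp τ hid
    simp only [one_smul, Function.comp_def] at h
    convert h using 1
    rw [hA_per τ, Matrix.mul_apply]
  -- derivative of g
  have hg' : ∀ τ ∈ Ioo (-b) b, HasDerivAt g (v τ (g τ)) τ := by
    intro τ hτ
    rw [hv_eq τ (Ioo_subset_Icc_self hτ)]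
    refine hasDerivAt_pi.2 fun i => hasDerivAt_pi.2 fun j => ?_
    have h : HasDerivAt (fun s => ∑ k, X s i k * X T k j)
        (∑ k, (A τ * X τ) i k * X T k j) τ :=
      HasDerivAt.fun_sum fun k _ => (hX_ode τ i k).mul_const (X T k j)
    have heq1 : (fun s => (X s * X T) i j) = fun s => ∑ k, X s i k * X T k j := by
      funext s; rw [Matrix.mul_apply]
    have heq2 : (∑ k, A τ i k * (X τ * X T) k j) = ∑ k, (A τ * X τ) i k * X T k j := by
      rw [← Matrix.mul_apply, ← Matrix.mul_apply, ← Matrix.mul_assoc]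
    simp only [hg_def, heq1, heq2]
    exact h
  -- continuity
  have hfc : Continuous f := by
    refine continuous_pi fun i => continuous_pi fun j => ?_
    refine continuous_iff_continuousAt.2 fun τ => ?_
    have hid : HasDerivAt (fun s : ℝ => s + T) 1 τ := by
      simpa using (hasDerivAt_id τ).add_const T
    exact ((hX_ode (τ + T) i j).scomp τ hid).continuousAt
  have hgc : Continuous g := by
    refine continuous_pi fun i => continuous_pi fun j => ?_
    have : (fun s => (X s * X T) i j) = fun s => ∑ k, X s i k * X T k j := by
      funext s; rw [Matrix.mul_apply]
    simp only [hg_def, this]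
    refine continuous_finset_sum _ fun k _ => ?_
    exact ((hX_ode · i k) |> fun h => (continuous_iff_continuousAt.2
      fun s => (h s).continuousAt)).mul continuous_const
  -- same initial value
  have h0 : f 0 = g 0 := by
    funext i j
    simp [hf_def, hg_def, hX0]
  -- uniqueness
  have := ODE_solution_unique_of_mem_Icc (s := fun _ => univ) (fun τ _ => hlip τ) h0_mem
    hfc.continuousOn hf' (fun _ _ => mem_univ _)
    hgc.continuousOn hg' (fun _ _ => mem_univ _) h0 ht_mem
  ext i j
  exact congrFun (congrFun this i) j
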